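/- Let N ≥ 1 and p ≥ 1 be integers and let λ = (λ_1 ≥ λ_2 ≥ ⋯ ≥ λ_N) be a tuple of integers with p ≥ λ_1 and λ_N ≥ 0, and let x_1 < x_2 < ⋯ < x_p be the elements of X(λ). Then ∏_{1 ≤ i < j ≤ N} (λ_i − λ_j + j − i)/(j − i) = V(X(λ)) · ∏_{i=1}^{p} 1/(x_i!·(N+p−1−x_i)!) · ∏_{i=1}^{p} (N+i−1)!. -/

import Mathlib

open Finset

/-- Vandermonde product of a finite set of integers, as a rational:
`V(S) = ∏_{x,y ∈ S, x < y} (y - x)`. -/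
def vand (S : Finset ℤ) : ℚ :=
  ∏ x ∈ S, ∏ y ∈ S.filter (fun y => x < y), ((y : ℚ) - (x : ℚ))

namespace DimFormula

/-- Cross product of absolute differences between two finsets. -/
def cross (A B : Finset ℤ) : ℚ := ∏ a ∈ A, ∏ b ∈ B, |(b:ℚ) - a|

lemma Icc_insert_top (a b : ℤ) (h : a ≤ b + 1) :
    Finset.Icc a (b+1) = insert (b+1) (Finset.Icc a b) := by
  ext z; simp only [mem_Icc, mem_insert]; omega

lemma Icc_insert_bot (a b : ℤ) (h : a - 1 ≤ b) :
    Finset.Icc (a-1) b = insert (a-1) (Finset.Icc a b) := by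
  ext z; simp only [mem_Icc, mem_insert]; omega

lemma fact_up (c : ℤ) (m : ℕ) :
    ∏ y ∈ Finset.Icc (c+1) (c+m), ((y:ℚ) - c) = Nat.factorial m := by
  induction m with
  | zero => simp
  | succ m ih =>
      rw [show ((m+1 : ℕ):ℤ) = (m:ℤ)+1 by push_cast; ring]
      rw [show (c + ((m:ℤ)+1)) = (c + m) + 1 by ring]
      rw [Icc_insert_top _ _ (by omega), prod_insert (by simp)]
      rw [ih, Nat.factorial_succ]
      push_cast; ring

lemma fact_down (c : ℤ) (m : ℕ) :
    ∏ y ∈ Finset.Icc (c-m) (c-1), ((c:ℚ) - y) = Nat.factorial m := by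
  induction m with
  | zero => simp
  | succ m ih =>
      rw [show (c - ((m+1:ℕ):ℤ)) = (c - m) - 1 by push_cast; ring]
      rw [Icc_insert_bot _ _ (by omega), prod_insert (by simp)]
      rw [ih, Nat.factorial_succ]
      push_cast; ring

lemma swap_lt' {α : Type*} [LinearOrder α] (A B : Finset α) (f : α → α → ℚ) :
    ∏ a ∈ A, ∏ b ∈ B.filter (fun b => b < a), f a b
      = ∏ b ∈ B, ∏ a ∈ A.filter (fun a => b < a), f a b := by
  apply Finset.prod_comm'
  intro a b
  simp only [mem_filter]
  tauto

lemma cross_eq (A B : Finset ℤ) (hAB : Disjoint A B) :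
    cross A B = (∏ a ∈ A, ∏ b ∈ B.filter (fun b => a < b), ((b:ℚ) - a))
      * ∏ b ∈ B, ∏ a ∈ A.filter (fun a => b < a), ((a:ℚ) - b) := by
  have key : cross A B = (∏ a ∈ A, ∏ b ∈ B.filter (fun b => a < b), ((b:ℚ) - a))
      * ∏ a ∈ A, ∏ b ∈ B.filter (fun b => b < a), ((a:ℚ) - b) := by
    rw [cross, ← Finset.prod_mul_distrib]
    apply Finset.prod_congr rfl
    intro a ha
    rw [← Finset.prod_filter_mul_prod_filter_not B (fun b => a < b)]
    congr 1
    · apply Finset.prod_congr rfl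
      intro b hb
      have h2 : a < b := (mem_filter.mp hb).2
      have h3 : (a:ℚ) < b := by exact_mod_cast h2
      rw [abs_of_pos (by linarith)]
    · have hset : B.filter (fun b => ¬ a < b) = B.filter (fun b => b < a) := by
        ext b
        simp only [mem_filter]
        constructor
        · rintro ⟨hb, h⟩
          refine ⟨hb, lt_of_le_of_ne (by omega) ?_⟩
          intro hba
          exact (Finset.disjoint_left.mp hAB ha) (hba ▸ hb)
        · rintro ⟨hb, h⟩; exact ⟨hb, by omega⟩
      rw [hset]
      apply Finset.prod_congr rfl
      intro b hb
      have h2 : b < a := (mem_filter.mp hb).2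
      have h3 : (b:ℚ) < a := by exact_mod_cast h2
      rw [abs_of_neg (by linarith)]
      ring
  rw [key, swap_lt']

lemma vand_union (A B : Finset ℤ) (hAB : Disjoint A B) :
    vand (A ∪ B) = vand A * vand B * cross A B := by
  rw [cross_eq A B hAB, vand, Finset.prod_union hAB]
  have hd : ∀ x : ℤ, Disjoint (A.filter (fun y => x < y)) (B.filter (fun y => x < y)) :=
    fun x => Finset.disjoint_filter_filter hAB
  have h1 : ∀ x, ∏ y ∈ (A ∪ B).filter (fun y => x < y), ((y:ℚ) - x)
      = (∏ y ∈ A.filter (fun y => x < y), ((y:ℚ) - x))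
        * ∏ y ∈ B.filter (fun y => x < y), ((y:ℚ) - x) := by
    intro x; rw [Finset.filter_union, Finset.prod_union (hd x)]
  rw [Finset.prod_congr rfl (fun x _ => h1 x), Finset.prod_congr rfl (fun x _ => h1 x),
    Finset.prod_mul_distrib, Finset.prod_mul_distrib, vand, vand]
  ring

lemma vand_Icc (n : ℕ) :
    vand (Finset.Icc (0:ℤ) ((n:ℤ)-1)) = ∏ k ∈ Finset.range n, (Nat.factorial k : ℚ) := by
  rw [vand]
  have h1 : ∀ x ∈ Finset.Icc (0:ℤ) ((n:ℤ)-1),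
      ∏ y ∈ (Finset.Icc (0:ℤ) ((n:ℤ)-1)).filter (fun y => x < y), ((y:ℚ) - x)
      = (Nat.factorial ((n:ℤ)-1-x).toNat : ℚ) := by
    intro x hx
    simp only [mem_Icc] at hx
    have hset : (Finset.Icc (0:ℤ) ((n:ℤ)-1)).filter (fun y => x < y)
        = Finset.Icc (x+1) (x + ((n:ℤ)-1-x).toNat) := by
      ext z; simp only [mem_filter, mem_Icc]; omega
    rw [hset, fact_up]
  rw [Finset.prod_congr rfl h1]
  apply Finset.prod_nbij' (i := fun x : ℤ => ((n:ℤ)-1-x).toNat) (j := fun k : ℕ => (n:ℤ)-1-k)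
  · intro a ha; simp only [mem_Icc] at ha; simp only [mem_range]; omega
  · intro a ha; simp only [mem_range] at ha; simp only [mem_Icc]; omega
  · intro a ha; simp only [mem_Icc] at ha; omega
  · intro a ha; simp only [mem_range] at ha; omega
  · intro a _; rfl

lemma vand_image_mono {N : ℕ} (f : Fin N → ℤ) (hf : StrictMono f) :
    vand (Finset.image f Finset.univ)
      = ∏ i : Fin N, ∏ j ∈ Finset.univ.filter (fun j : Fin N => i < j),
          ((f j : ℚ) - (f i : ℚ)) := by
  rw [vand, Finset.prod_image (fun a _ b _ h => hf.injective h)]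
  apply Finset.prod_congr rfl
  intro i _
  have hset : (Finset.image f Finset.univ).filter (fun y => f i < y)
      = Finset.image f (Finset.univ.filter (fun j : Fin N => i < j)) := by
    ext z
    simp only [mem_filter, mem_image, mem_univ, true_and]
    constructor
    · rintro ⟨⟨j, rfl⟩, hlt⟩
      exact ⟨j, ⟨hf.lt_iff_lt.mp hlt, rfl⟩⟩
    · rintro ⟨j, hij, rfl⟩
      exact ⟨⟨j, rfl⟩, hf hij⟩
  rw [hset, Finset.prod_image (fun a _ b _ h => hf.injective h)]

lemma vand_image_anti {N : ℕ} (f : Fin N → ℤ) (hf : StrictAnti f) :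
    vand (Finset.image f Finset.univ)
      = ∏ i : Fin N, ∏ j ∈ Finset.univ.filter (fun j : Fin N => i < j),
          ((f i : ℚ) - (f j : ℚ)) := by
  rw [vand, Finset.prod_image (fun a _ b _ h => hf.injective h)]
  have h1 : ∀ i : Fin N, (Finset.image f Finset.univ).filter (fun y => f i < y)
      = Finset.image f (Finset.univ.filter (fun j : Fin N => j < i)) := by
    intro i
    ext z
    simp only [mem_filter, mem_image, mem_univ, true_and]
    constructor
    · rintro ⟨⟨j, rfl⟩, hlt⟩
      exact ⟨j, ⟨(by by_contra hc; push_neg at hc; exact absurd hlt (not_lt.mpr (hf.antitone hc))), rfl⟩⟩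
    · rintro ⟨j, hij, rfl⟩
      exact ⟨⟨j, rfl⟩, hf hij⟩
  calc ∏ i : Fin N, ∏ y ∈ (Finset.image f Finset.univ).filter (fun y => f i < y), ((y:ℚ) - f i)
      = ∏ i : Fin N, ∏ j ∈ Finset.univ.filter (fun j : Fin N => j < i), ((f j : ℚ) - f i) := by
        apply Finset.prod_congr rfl
        intro i _
        rw [h1 i, Finset.prod_image (fun a _ b _ h => hf.injective h)]
    _ = _ := by
        rw [swap_lt' (univ) (univ) (fun i j => ((f j : ℚ) - f i))]

lemma erase_fact (t b : ℤ) (h0 : 0 ≤ b) (h1 : b ≤ t) :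
    ∏ a ∈ (Finset.Icc (0:ℤ) t).erase b, |(a:ℚ) - b|
      = (Nat.factorial b.toNat : ℚ) * (Nat.factorial (t-b).toNat : ℚ) := by
  have hsplit : (Finset.Icc (0:ℤ) t).erase b
      = Finset.Icc (b - b.toNat) (b-1) ∪ Finset.Icc (b+1) (b + (t-b).toNat) := by
    ext z
    simp only [mem_erase, mem_Icc, mem_union]
    omega
  have hdisj : Disjoint (Finset.Icc (b - (b.toNat:ℤ)) (b-1)) (Finset.Icc (b+1) (b + ((t-b).toNat:ℤ))) := by
    rw [Finset.disjoint_left]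
    intro z hz hz'
    simp only [mem_Icc] at hz hz'
    omega
  rw [hsplit, Finset.prod_union hdisj]
  congr 1
  · rw [← fact_down b b.toNat]
    apply Finset.prod_congr rfl
    intro a ha
    simp only [mem_Icc] at ha
    have : (a:ℚ) < b := by exact_mod_cast (show a < b by omega)
    rw [abs_of_neg (by linarith)]
    ring
  · rw [← fact_up b (t-b).toNat]
    apply Finset.prod_congr rfl
    intro a ha
    simp only [mem_Icc] at ha
    have : (b:ℚ) < a := by exact_mod_cast (show b < a by omega)
    rw [abs_of_pos (by linarith)]

lemma vand_sq (S : Finset ℤ) :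
    ∏ b ∈ S, ∏ a ∈ S.erase b, |(a:ℚ) - b| = vand S * vand S := by
  have h1 : ∀ b ∈ S, ∏ a ∈ S.erase b, |(a:ℚ) - b|
      = (∏ a ∈ S.filter (fun a => a < b), ((b:ℚ) - a))
        * ∏ a ∈ S.filter (fun a => b < a), ((a:ℚ) - b) := by
    intro b hb
    have hsplit : S.erase b = S.filter (fun a => a < b) ∪ S.filter (fun a => b < a) := by
      ext z
      simp only [mem_erase, mem_filter, mem_union]
      constructor
      · rintro ⟨hne, hz⟩
        rcases lt_or_gt_of_ne hne with h | h
        · exact Or.inl ⟨hz, h⟩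
        · exact Or.inr ⟨hz, h⟩
      · rintro (⟨hz, h⟩ | ⟨hz, h⟩) <;> exact ⟨by omega, hz⟩
    have hdisj : Disjoint (S.filter (fun a => a < b)) (S.filter (fun a => b < a)) := by
      rw [Finset.disjoint_left]
      intro z hz hz'
      simp only [mem_filter] at hz hz'
      omega
    rw [hsplit, Finset.prod_union hdisj]
    congr 1
    · apply Finset.prod_congr rfl
      intro a ha
      have : (a:ℚ) < b := by exact_mod_cast (mem_filter.mp ha).2
      rw [abs_of_neg (by linarith)]
      ring
    · apply Finset.prod_congr rfl
      intro a ha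
      have : (b:ℚ) < a := by exact_mod_cast (mem_filter.mp ha).2
      rw [abs_of_pos (by linarith)]
  rw [Finset.prod_congr rfl h1, Finset.prod_mul_distrib,
    swap_lt' S S (fun b a => ((b:ℚ) - a))]
  rfl

end DimFormula

/-- Weyl's dimension formula for `Dim(λ)` in terms of the point
configuration `X(λ) = {0,…,N+p−1} \ {λ_i − i + N}` (whose elements, listed
increasingly, are `x 0 < x 1 < ⋯ < x (p-1)`; here `lam i` stands for `λ_{i+1}`):
`∏_{1 ≤ i < j ≤ N} (λ_i − λ_j + j − i)/(j − i)
  = V(X(λ)) · ∏_{i=1}^{p} 1/(x_i!·(N+p−1−x_i)!) · ∏_{i=1}^{p} (N+i−1)!`. -/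
theorem dim_formula (N p : ℕ) (hN : 1 ≤ N) (hp : 1 ≤ p)
    (lam : Fin N → ℤ) (hmono : ∀ i j : Fin N, i ≤ j → lam j ≤ lam i)
    (htop : ∀ i, lam i ≤ p) (hbot : ∀ i, 0 ≤ lam i)
    (x : Fin p → ℤ) (hx : StrictMono x)
    (hX : Finset.image x Finset.univ
      = Finset.Icc (0 : ℤ) ((N : ℤ) + p - 1)
        \ Finset.image (fun i : Fin N => lam i + N - 1 - (i : ℕ)) Finset.univ) :
    (∏ i : Fin N, ∏ j ∈ Finset.univ.filter (fun j : Fin N => i < j),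
        (((lam i - lam j : ℤ) : ℚ) + (j : ℕ) - (i : ℕ)) / ((j : ℕ) - (i : ℕ) : ℚ))
    = vand (Finset.image x Finset.univ)
      * (∏ i : Fin p, (1 : ℚ) / ((Nat.factorial (x i).toNat : ℚ)
          * (Nat.factorial ((N : ℤ) + p - 1 - x i).toNat : ℚ)))
      * ∏ i : Fin p, (Nat.factorial (N + (i : ℕ)) : ℚ) := by
  classical
  set t : ℤ := (N:ℤ) + p - 1 with ht
  set l : Fin N → ℤ := fun i : Fin N => lam i + N - 1 - (i:ℕ) with hl
  set L := Finset.image l Finset.univ with hL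
  set X := Finset.image x Finset.univ with hXdef
  have hanti : StrictAnti l := by
    intro i j hij
    have h1 : lam j ≤ lam i := hmono i j (le_of_lt hij)
    have h2 : (i:ℕ) < (j:ℕ) := hij
    simp only [hl]
    omega
  have hLF : L ⊆ Finset.Icc (0:ℤ) t := by
    intro z hz
    simp only [hL, mem_image, mem_univ, true_and] at hz
    obtain ⟨i, rfl⟩ := hz
    have h1 := htop i
    have h2 := hbot i
    have h3 := i.isLt
    simp only [mem_Icc, hl, ht]
    omega
  have hdisjLX : Disjoint L X := by rw [hX]; exact Finset.disjoint_sdiff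
  have hunion : L ∪ X = Finset.Icc (0:ℤ) t := by
    rw [hX]; exact Finset.union_sdiff_of_subset hLF
  have hXF : X ⊆ Finset.Icc (0:ℤ) t := by rw [hX]; exact Finset.sdiff_subset
  -- Step A : LHS = vand L / superfactorial N
  have hdenom : (∏ i : Fin N, ∏ j ∈ Finset.univ.filter (fun j : Fin N => i < j),
        (((j:ℕ):ℚ) - ((i:ℕ):ℚ))) = ∏ k ∈ Finset.range N, (Nat.factorial k : ℚ) := by
    have himg : Finset.image (fun i : Fin N => ((i:ℕ):ℤ)) Finset.univ
        = Finset.Icc (0:ℤ) ((N:ℤ)-1) := by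
      ext z
      simp only [mem_image, mem_univ, true_and, mem_Icc]
      constructor
      · rintro ⟨i, rfl⟩
        have := i.isLt
        omega
      · rintro ⟨h0, h1⟩
        refine ⟨⟨z.toNat, by omega⟩, by simp; omega⟩
    have hsm : StrictMono (fun i : Fin N => ((i:ℕ):ℤ)) := by
      intro a b hab
      show ((a:ℕ):ℤ) < ((b:ℕ):ℤ)
      exact_mod_cast hab
    have hv := DimFormula.vand_image_mono (fun i : Fin N => ((i:ℕ):ℤ)) hsm
    rw [himg, DimFormula.vand_Icc N] at hv
    rw [hv]
    apply Finset.prod_congr rfl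
    intro i _
    apply Finset.prod_congr rfl
    intro j _
    push_cast
    ring
  have hstep1 : (∏ i : Fin N, ∏ j ∈ Finset.univ.filter (fun j : Fin N => i < j),
        (((lam i - lam j : ℤ) : ℚ) + (j : ℕ) - (i : ℕ)) / ((j : ℕ) - (i : ℕ) : ℚ))
      = vand L / ∏ k ∈ Finset.range N, (Nat.factorial k : ℚ) := by
    have hstep : (∏ i : Fin N, ∏ j ∈ Finset.univ.filter (fun j : Fin N => i < j),
        (((lam i - lam j : ℤ) : ℚ) + (j : ℕ) - (i : ℕ)) / ((j : ℕ) - (i : ℕ) : ℚ))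
        = (∏ i : Fin N, ∏ j ∈ Finset.univ.filter (fun j : Fin N => i < j),
            ((l i : ℚ) - (l j : ℚ)))
          / ∏ i : Fin N, ∏ j ∈ Finset.univ.filter (fun j : Fin N => i < j),
            (((j:ℕ):ℚ) - ((i:ℕ):ℚ)) := by
      rw [← Finset.prod_div_distrib]
      apply Finset.prod_congr rfl
      intro i _
      rw [← Finset.prod_div_distrib]
      apply Finset.prod_congr rfl
      intro j _
      congr 1
      simp only [hl]
      push_cast
      ring
    rw [hstep, hdenom, ← DimFormula.vand_image_anti l hanti]
  -- Step B/C : Vandermonde of the full interval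
  have hvF : vand (Finset.Icc (0:ℤ) t) = vand L * vand X * DimFormula.cross L X := by
    rw [← hunion]
    exact DimFormula.vand_union L X hdisjLX
  have hvF2 : vand (Finset.Icc (0:ℤ) t)
      = (∏ k ∈ Finset.range N, (Nat.factorial k : ℚ))
        * ∏ i ∈ Finset.range p, (Nat.factorial (N + i) : ℚ) := by
    have htt : t = ((N+p : ℕ):ℤ) - 1 := by push_cast [ht]; ring
    rw [htt, DimFormula.vand_Icc (N+p), Finset.prod_range_add]
  have key : vand L * vand X * DimFormula.cross L X
      = (∏ k ∈ Finset.range N, (Nat.factorial k : ℚ))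
        * ∏ i ∈ Finset.range p, (Nat.factorial (N + i) : ℚ) := hvF.symm.trans hvF2
  -- Step F : factorial product over X
  have hfactprod : (∏ b ∈ X, ((Nat.factorial b.toNat : ℚ) * (Nat.factorial (t-b).toNat : ℚ)))
      = DimFormula.cross L X * (vand X * vand X) := by
    have h1 : ∀ b ∈ X, (Nat.factorial b.toNat : ℚ) * (Nat.factorial (t-b).toNat : ℚ)
        = ∏ a ∈ (Finset.Icc (0:ℤ) t).erase b, |(a:ℚ) - b| := by
      intro b hb
      have hb' := hXF hb
      simp only [mem_Icc] at hb'
      rw [DimFormula.erase_fact t b hb'.1 hb'.2]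
    have h2 : ∀ b ∈ X, (Finset.Icc (0:ℤ) t).erase b = L ∪ X.erase b := by
      intro b hb
      rw [← hunion, Finset.erase_union_distrib,
        Finset.erase_eq_of_notMem (Finset.disjoint_right.mp hdisjLX hb)]
    have h3 : ∀ b ∈ X, (Nat.factorial b.toNat : ℚ) * (Nat.factorial (t-b).toNat : ℚ)
        = (∏ a ∈ L, |(a:ℚ) - b|) * ∏ a ∈ X.erase b, |(a:ℚ) - b| := by
      intro b hb
      rw [h1 b hb, h2 b hb, Finset.prod_union
        (Finset.disjoint_of_subset_right (Finset.erase_subset b X) hdisjLX)]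
    rw [Finset.prod_congr rfl h3, Finset.prod_mul_distrib, DimFormula.vand_sq]
    congr 1
    rw [DimFormula.cross, Finset.prod_comm]
    apply Finset.prod_congr rfl
    intro b _
    apply Finset.prod_congr rfl
    intro a _
    rw [abs_sub_comm]
  -- reindex the Fin p products
  have hxinj : ∀ a ∈ Finset.univ, ∀ b ∈ (Finset.univ : Finset (Fin p)), x a = x b → a = b :=
    fun a _ b _ h => hx.injective h
  have hmid : (∏ i : Fin p, (1 : ℚ) / ((Nat.factorial (x i).toNat : ℚ)
          * (Nat.factorial (t - x i).toNat : ℚ)))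
      = ∏ b ∈ X, (1:ℚ) / ((Nat.factorial b.toNat : ℚ) * (Nat.factorial (t-b).toNat : ℚ)) := by
    rw [hXdef, Finset.prod_image hxinj]
  have hthird : (∏ i : Fin p, (Nat.factorial (N + (i:ℕ)) : ℚ))
      = ∏ i ∈ Finset.range p, (Nat.factorial (N + i) : ℚ) :=
    Fin.prod_univ_eq_prod_range (fun i => (Nat.factorial (N + i) : ℚ)) p
  -- nonvanishing
  have hvXpos : 0 < vand X := by
    rw [vand]
    apply Finset.prod_pos
    intro a _
    apply Finset.prod_pos
    intro y hy
    have : a < y := (mem_filter.mp hy).2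
    have : (a:ℚ) < y := by exact_mod_cast this
    linarith
  have hcrosspos : 0 < DimFormula.cross L X := by
    rw [DimFormula.cross]
    apply Finset.prod_pos
    intro a ha
    apply Finset.prod_pos
    intro b hb
    have hne : a ≠ b := fun h => Finset.disjoint_left.mp hdisjLX ha (h ▸ hb)
    have : (b:ℚ) ≠ a := by exact_mod_cast (Ne.symm hne)
    exact abs_pos.mpr (sub_ne_zero.mpr this)
  have hDpos : 0 < ∏ k ∈ Finset.range N, (Nat.factorial k : ℚ) := by
    apply Finset.prod_pos
    intro k _
    exact_mod_cast Nat.factorial_pos k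
  -- conclude
  rw [hstep1, hmid, hthird]
  have hinv : (∏ b ∈ X, (1:ℚ) / ((Nat.factorial b.toNat : ℚ) * (Nat.factorial (t-b).toNat : ℚ)))
      = 1 / ∏ b ∈ X, ((Nat.factorial b.toNat : ℚ) * (Nat.factorial (t-b).toNat : ℚ)) := by
    rw [Finset.prod_div_distrib, Finset.prod_const_one]
  rw [hinv, hfactprod]
  have hv0 : vand X ≠ 0 := ne_of_gt hvXpos
  have hc0 : DimFormula.cross L X ≠ 0 := ne_of_gt hcrosspos
  have hD0 : (∏ k ∈ Finset.range N, (Nat.factorial k : ℚ)) ≠ 0 := ne_of_gt hDpos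
  field_simp
  linear_combination key
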